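/- For all integers n ≥ 0 and i ≥ 1, ā_{2i}(2n) ≡ ā_{2i}(n) (mod 4). -/

import Mathlib

/-- `fk k` is the infinite product `∏_{n ≥ 1} (1 - q^{k n})` in `ℤ[[q]]`, defined
coefficientwise via stable partial products. -/
noncomputable def fk (k : ℕ) : PowerSeries ℤ :=
  PowerSeries.mk fun n =>
    PowerSeries.coeff n
      (∏ m ∈ Finset.Icc 1 (n + 1), (1 - (PowerSeries.X : PowerSeries ℤ) ^ (k * m)))

/-- `a : ℕ → ℕ` is the generalized overcubic partition function `ā_c`, i.e.
`(∑_{n≥0} ā_c(n) q^n) · f_1^2 · f_2^{2c} = f_2^3 · f_4^{c-1}` in `ℤ[[q]]`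
(equivalently `∑_{n≥0} ā_c(n) q^n = f_4^{c-1}/(f_1^2 f_2^{2c-3})`). -/
def IsGenOvercubic (c : ℕ) (a : ℕ → ℕ) : Prop :=
  (PowerSeries.mk fun n => (a n : ℤ)) * (fk 1) ^ 2 * (fk 2) ^ (2 * c) =
    (fk 2) ^ 3 * (fk 4) ^ (c - 1)


open PowerSeries Finset

noncomputable section

namespace OC

variable {R S : Type*} [CommRing R] [CommRing S]

/-- partial products -/
def pp (R : Type*) [CommRing R] (k N : ℕ) : PowerSeries R :=
  ∏ m ∈ Finset.Icc 1 N, (1 - (X : PowerSeries R) ^ (k * m))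

theorem coeff_pp_stable (k : ℕ) (hk : 1 ≤ k) (n : ℕ) :
    ∀ M, n ≤ M → PowerSeries.coeff n (pp R k M) = coeff n (pp R k n) := by
  intro M
  induction M with
  | zero => intro h; have : n = 0 := by omega
            subst this; rfl
  | succ M ih =>
    intro h
    rcases Nat.lt_or_ge n (M+1) with h1 | h2
    · have hnM : n ≤ M := by omega
      rw [pp, Finset.prod_Icc_succ_top (by omega : 1 ≤ M + 1)]
      rw [mul_sub, mul_one, map_sub, coeff_mul_X_pow']
      rw [if_neg (by nlinarith), sub_zero, ← pp, ih hnM]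
    · have : n = M + 1 := by omega
      subst this; rfl

end OC

namespace OC
variable {R S : Type*} [CommRing R] [CommRing S]

/-- the coefficientwise `q ↦ q^2` substitution -/
def ex2f (F : PowerSeries R) : PowerSeries R :=
  PowerSeries.mk fun n => if 2 ∣ n then coeff (n / 2) F else 0

theorem coeff_ex2f_even (F : PowerSeries R) (n : ℕ) :
    coeff (2 * n) (ex2f F) = coeff n F := by
  simp [ex2f, coeff_mk]

theorem coeff_ex2f_odd (F : PowerSeries R) (n : ℕ) (h : ¬ 2 ∣ n) :
    coeff n (ex2f F) = 0 := by
  simp [ex2f, coeff_mk, h]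

theorem ex2f_mul (F G : PowerSeries R) : ex2f (F * G) = ex2f F * ex2f G := by
  ext n
  rcases Nat.even_or_odd n with ⟨m, hm⟩ | hodd
  · rw [show n = 2 * m by omega, coeff_ex2f_even, coeff_mul, coeff_mul]
    rw [← Finset.sum_filter_of_ne (p := fun p : ℕ × ℕ => 2 ∣ p.1)
      (f := fun p : ℕ × ℕ => coeff p.1 (ex2f F) * coeff p.2 (ex2f G))]
    · refine Finset.sum_nbij' (fun p : ℕ × ℕ => (2 * p.1, 2 * p.2))
        (fun p : ℕ × ℕ => (p.1 / 2, p.2 / 2)) ?_ ?_ ?_ ?_ ?_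
      · rintro ⟨a, b⟩ hab
        simp only [Finset.HasAntidiagonal.mem_antidiagonal] at hab
        simp only [Finset.mem_filter, Finset.HasAntidiagonal.mem_antidiagonal]
        omega
      · rintro ⟨a, b⟩ hab
        simp only [Finset.mem_filter, Finset.HasAntidiagonal.mem_antidiagonal] at hab
        simp only [Finset.HasAntidiagonal.mem_antidiagonal]
        omega
      · rintro ⟨a, b⟩ _
        simp
      · rintro ⟨a, b⟩ hab
        simp only [Finset.mem_filter, Finset.HasAntidiagonal.mem_antidiagonal] at hab
        have h1 : 2 ∣ a := hab.2
        have h2 : 2 ∣ b := by omega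
        simp only [Prod.mk.injEq]
        omega
      · rintro ⟨a, b⟩ hab
        rw [coeff_ex2f_even, coeff_ex2f_even]
    · rintro ⟨a, b⟩ hab hne
      by_contra hnd
      rw [coeff_ex2f_odd _ _ hnd] at hne
      simp at hne
  · obtain ⟨c, hc⟩ := hodd
    have hn : ¬ 2 ∣ n := by omega
    rw [coeff_ex2f_odd _ _ hn, coeff_mul]
    refine (Finset.sum_eq_zero ?_).symm
    rintro ⟨a, b⟩ hab
    simp only [Finset.HasAntidiagonal.mem_antidiagonal] at hab
    rcases Nat.even_or_odd a with ⟨d, hd⟩ | ⟨d, hd⟩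
    · have hb : ¬ 2 ∣ b := by omega
      rw [coeff_ex2f_odd _ _ hb, mul_zero]
    · have ha' : ¬ 2 ∣ a := by omega
      rw [coeff_ex2f_odd _ _ ha', zero_mul]

/-- `ex2` as a ring hom. -/
def ex2 : PowerSeries R →+* PowerSeries R where
  toFun := ex2f
  map_one' := by
    ext n
    rcases Nat.even_or_odd n with ⟨m, hm⟩ | hodd
    · rw [show n = 2 * m by omega, coeff_ex2f_even, coeff_one, coeff_one]
      rcases Nat.eq_zero_or_pos m with rfl | hm'
      · simp
      · rw [if_neg (by omega), if_neg (by omega)]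
    · obtain ⟨c, hc⟩ := hodd
      rw [coeff_ex2f_odd _ _ (by omega), coeff_one, if_neg (by omega)]
  map_mul' := ex2f_mul
  map_zero' := by ext n; simp [ex2f, coeff_mk]
  map_add' := by
    intro F G; ext n; simp only [ex2f, coeff_mk, map_add]
    split <;> simp

theorem coeff_ex2_even (F : PowerSeries R) (n : ℕ) :
    coeff (2 * n) (ex2 F) = coeff n F := coeff_ex2f_even F n

theorem coeff_ex2_odd (F : PowerSeries R) (n : ℕ) (h : ¬ 2 ∣ n) :
    coeff n (ex2 F) = 0 := coeff_ex2f_odd F n h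

theorem ex2_injective : Function.Injective (ex2 (R := R)) := by
  intro F G h
  ext n
  have := congrArg (coeff (2 * n)) h
  rwa [coeff_ex2_even, coeff_ex2_even] at this

theorem ex2_X_pow (j : ℕ) : ex2 ((X : PowerSeries R) ^ j) = X ^ (2 * j) := by
  ext n
  rcases Nat.even_or_odd n with ⟨m, hm⟩ | hodd
  · rw [show n = 2 * m by omega, coeff_ex2_even, coeff_X_pow, coeff_X_pow]
    by_cases h : m = j
    · subst h; simp
    · rw [if_neg h, if_neg (by omega)]
  · obtain ⟨c, hc⟩ := hodd
    rw [coeff_ex2_odd _ _ (by omega), coeff_X_pow, if_neg (by omega)]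

theorem ex2_map (f : R →+* S) (F : PowerSeries R) :
    ex2 (PowerSeries.map f F) = PowerSeries.map f (ex2 F) := by
  ext n
  rcases Nat.even_or_odd n with ⟨m, hm⟩ | hodd
  · rw [show n = 2 * m by omega, coeff_ex2_even, coeff_map, coeff_map, coeff_ex2_even]
  · obtain ⟨c, hc⟩ := hodd
    rw [coeff_ex2_odd _ _ (by omega), coeff_map, coeff_ex2_odd _ _ (by omega), map_zero]

theorem rescale_neg_one_ex2 (F : PowerSeries R) :
    rescale (-1 : R) (ex2 F) = ex2 F := by
  ext n
  rw [coeff_rescale]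
  rcases Nat.even_or_odd n with ⟨m, hm⟩ | hodd
  · rw [show n = 2 * m by omega]
    rw [show ((-1 : R)) ^ (2 * m) = 1 by rw [pow_mul]; simp, one_mul]
  · obtain ⟨c, hc⟩ := hodd
    rw [coeff_ex2_odd F n (by omega), mul_zero]

end OC

namespace OC
variable {R S : Type*} [CommRing R] [CommRing S]

/-- truncated equality -/
def truncEq (n : ℕ) (F G : PowerSeries R) : Prop := ∀ j ≤ n, coeff j F = coeff j G

theorem truncEq.mul {n : ℕ} {F F' G G' : PowerSeries R} (h1 : truncEq n F F')
    (h2 : truncEq n G G') : truncEq n (F * G) (F' * G') := by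
  intro j hj
  rw [coeff_mul, coeff_mul]
  refine Finset.sum_congr rfl ?_
  rintro ⟨a, b⟩ hab
  simp only [Finset.HasAntidiagonal.mem_antidiagonal] at hab
  rw [h1 a (by omega), h2 b (by omega)]

theorem truncEq.pow {n : ℕ} {F F' : PowerSeries R} (h : truncEq n F F') (s : ℕ) :
    truncEq n (F ^ s) (F' ^ s) := by
  induction s with
  | zero => intro j hj; rfl
  | succ s ih =>
    rw [pow_succ, pow_succ]
    exact ih.mul h

theorem map_pp (f : R →+* S) (k N : ℕ) :
    PowerSeries.map f (pp R k N) = pp S k N := by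
  unfold pp
  rw [map_prod]
  refine Finset.prod_congr rfl fun m _ => ?_
  simp

theorem coeff_fk_pp (k n : ℕ) : coeff n (fk k) = coeff n (pp ℤ k (n + 1)) := by
  simp [fk, pp, coeff_mk]

theorem truncEq_map_fk (f : ℤ →+* R) (k : ℕ) (hk : 1 ≤ k) {n N : ℕ} (hN : n ≤ N) :
    truncEq n (PowerSeries.map f (fk k)) (pp R k N) := by
  intro j hj
  rw [coeff_map, coeff_fk_pp, coeff_pp_stable k hk j (j+1) (by omega),
    ← coeff_pp_stable k hk j N (by omega), ← map_pp f, coeff_map]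

theorem truncEq_fk (k : ℕ) (hk : 1 ≤ k) {n N : ℕ} (hN : n ≤ N) :
    truncEq n (fk k) (pp ℤ k N) := by
  intro j hj
  rw [coeff_fk_pp, coeff_pp_stable k hk j (j+1) (by omega),
    ← coeff_pp_stable k hk j N (by omega)]

theorem pp_two_mul (k N : ℕ) : pp R (2 * k) N = ex2 (pp R k N) := by
  unfold pp
  rw [map_prod]
  refine Finset.prod_congr rfl fun m _ => ?_
  rw [map_sub, map_one, ex2_X_pow, mul_assoc]

theorem fk_two_mul (k : ℕ) (hk : 1 ≤ k) : fk (2 * k) = ex2 (fk k) := by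
  ext n
  rcases Nat.even_or_odd n with ⟨m, hm⟩ | ⟨c, hc⟩
  · rw [show n = 2 * m by omega, coeff_ex2_even]
    rw [(truncEq_fk (2 * k) (by omega) (le_refl (2*m)) : truncEq (2*m) _ _) (2*m) le_rfl,
      pp_two_mul, coeff_ex2_even, (truncEq_fk k hk (show m ≤ 2*m by omega) m le_rfl)]
  · rw [coeff_ex2_odd _ _ (by omega),
      (truncEq_fk (2 * k) (by omega) (le_refl n) : truncEq n _ _) n le_rfl,
      pp_two_mul, coeff_ex2_odd _ _ (by omega)]

theorem constantCoeff_pp (k N : ℕ) (hk : 1 ≤ k) : coeff 0 (pp R k N) = 1 := by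
  unfold pp
  rw [coeff_zero_eq_constantCoeff, map_prod]
  refine Finset.prod_eq_one fun m hm => ?_
  simp only [Finset.mem_Icc] at hm
  rw [map_sub, map_one, map_pow, constantCoeff_X, zero_pow (by nlinarith : k * m ≠ 0), sub_zero]

theorem constantCoeff_fk (k : ℕ) (hk : 1 ≤ k) : coeff 0 (fk k) = 1 := by
  rw [coeff_fk_pp, constantCoeff_pp k 1 hk]

theorem isUnit_map_fk (f : ℤ →+* R) (k : ℕ) (hk : 1 ≤ k) :
    IsUnit (PowerSeries.map f (fk k)) := by
  rw [PowerSeries.isUnit_iff_constantCoeff]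
  have : constantCoeff (PowerSeries.map f (fk k)) = 1 := by
    rw [← coeff_zero_eq_constantCoeff, coeff_map, constantCoeff_fk k hk, map_one]
  rw [this]; exact isUnit_one

end OC

namespace OC

theorem zmod2_sq (x : ZMod 2) : x * x = x := by revert x; decide

theorem zmod2_cancel (x y : ZMod 2) : x * y + y * x = 0 := by revert x y; decide

/-- Frobenius in characteristic 2 -/
theorem frob (F : PowerSeries (ZMod 2)) : F ^ 2 = ex2 F := by
  ext n
  rw [pow_two, coeff_mul]
  rcases Nat.even_or_odd n with ⟨m, hm⟩ | ⟨c, hc⟩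
  · rw [show n = 2 * m from by omega, coeff_ex2_even]
    have hmem : ((m, m) : ℕ × ℕ) ∈ Finset.HasAntidiagonal.antidiagonal (2 * m) := by
      simp only [Finset.HasAntidiagonal.mem_antidiagonal]; omega
    rw [← Finset.sum_erase_add _ _ hmem, zmod2_sq]
    have hzero : ∑ p ∈ (Finset.HasAntidiagonal.antidiagonal (2 * m)).erase (m, m),
        coeff p.1 F * coeff p.2 F = 0 := by
      refine Finset.sum_involution (fun p _ => p.swap) ?_ ?_ ?_ ?_
      · rintro ⟨a, b⟩ ha
        exact zmod2_cancel _ _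
      · rintro ⟨a, b⟩ ha hne hsw
        simp only [Finset.mem_erase, Finset.HasAntidiagonal.mem_antidiagonal] at ha
        have hba : b = a := congrArg Prod.fst hsw
        apply ha.1
        have h1 : a = m := by omega
        have h2 : b = m := by omega
        subst h1; subst h2; rfl
      · rintro ⟨a, b⟩ ha
        simp only [Finset.mem_erase, Finset.HasAntidiagonal.mem_antidiagonal] at ha ⊢
        refine ⟨?_, show b + a = 2 * m by omega⟩
        intro h
        apply ha.1
        have h1 : b = m := congrArg Prod.fst h
        have h2 : a = m := congrArg Prod.snd h
        subst h1; subst h2; rfl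
      · rintro ⟨a, b⟩ _; rfl
    rw [hzero, zero_add]
  · rw [coeff_ex2_odd _ _ (by omega)]
    refine Finset.sum_involution (fun p _ => p.swap) ?_ ?_ ?_ ?_
    · rintro ⟨a, b⟩ ha
      exact zmod2_cancel _ _
    · rintro ⟨a, b⟩ ha hne hsw
      simp only [Finset.HasAntidiagonal.mem_antidiagonal] at ha
      have hba : b = a := congrArg Prod.fst hsw
      omega
    · rintro ⟨a, b⟩ ha
      simp only [Finset.HasAntidiagonal.mem_antidiagonal] at ha ⊢
      show b + a = n
      omega
    · rintro ⟨a, b⟩ _; rfl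

end OC

namespace OC
variable {R S : Type*} [CommRing R] [CommRing S]

theorem prod_filter_even {A : Type*} [CommMonoid A] (M : ℕ) (g : ℕ → A) :
    ∏ m ∈ (Finset.Icc 1 (2*M)).filter (fun m => 2 ∣ m), g m = ∏ j ∈ Finset.Icc 1 M, g (2*j) := by
  refine Finset.prod_nbij' (fun m => m / 2) (fun j => 2 * j) ?_ ?_ ?_ ?_ ?_
  · intro a ha
    simp only [Finset.mem_filter, Finset.mem_Icc] at ha ⊢
    omega
  · intro a ha
    simp only [Finset.mem_filter, Finset.mem_Icc] at ha ⊢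
    omega
  · intro a ha
    simp only [Finset.mem_filter, Finset.mem_Icc] at ha
    show 2 * (a / 2) = a
    omega
  · intro a ha
    show 2 * a / 2 = a
    omega
  · intro a ha
    simp only [Finset.mem_filter, Finset.mem_Icc] at ha
    have : 2 * (a / 2) = a := by omega
    rw [this]

theorem rescale_pp_one (N : ℕ) :
    rescale (-1 : R) (pp R 1 N) = ∏ m ∈ Finset.Icc 1 N, (1 - C ((-1)^m) * X^m) := by
  unfold pp
  rw [map_prod]
  refine Finset.prod_congr rfl fun m _ => ?_
  rw [map_sub, map_one, one_mul, map_pow, rescale_X, mul_pow, ← map_pow]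

theorem fin_identity (M : ℕ) :
    pp ℤ 1 (2*M) * rescale (-1 : ℤ) (pp ℤ 1 (2*M)) * pp ℤ 4 M
      = pp ℤ 2 (2*M) * (pp ℤ 2 M)^2 := by
  have hcomb : pp ℤ 1 (2*M) * rescale (-1 : ℤ) (pp ℤ 1 (2*M))
      = ∏ m ∈ Finset.Icc 1 (2*M),
          (if 2 ∣ m then (1 - (X : PowerSeries ℤ)^m)^2 else (1 - X^(2*m))) := by
    rw [rescale_pp_one]
    unfold pp
    rw [← Finset.prod_mul_distrib]
    refine Finset.prod_congr rfl fun m hm => ?_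
    by_cases h2 : 2 ∣ m
    · rw [if_pos h2]
      obtain ⟨t, rfl⟩ := h2
      rw [show ((-1 : ℤ))^(2*t) = 1 by rw [pow_mul]; norm_num, map_one, one_mul, one_mul, sq]
    · rw [if_neg h2]
      have hodd : Odd m := Nat.odd_iff.mpr (by omega)
      rw [hodd.neg_one_pow, map_neg, map_one, one_mul, two_mul, pow_add]
      ring
  rw [mul_comm (pp ℤ 1 (2*M)) _] at hcomb ⊢
  rw [mul_comm _ (pp ℤ 4 M)]
  rw [hcomb, Finset.prod_ite]
  have he1 : ∏ m ∈ (Finset.Icc 1 (2*M)).filter (fun m => 2 ∣ m), (1 - (X : PowerSeries ℤ)^m)^2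
      = (pp ℤ 2 M)^2 := by
    rw [prod_filter_even M (fun m => (1 - (X : PowerSeries ℤ)^m)^2), Finset.prod_pow]
    rfl
  have he2 : pp ℤ 2 (2*M)
      = (∏ m ∈ (Finset.Icc 1 (2*M)).filter (fun m => 2 ∣ m), (1 - (X : PowerSeries ℤ)^(2*m)))
        * ∏ m ∈ (Finset.Icc 1 (2*M)).filter (fun m => ¬ 2 ∣ m), (1 - (X : PowerSeries ℤ)^(2*m)) := by
    rw [Finset.prod_filter_mul_prod_filter_not]
    rfl
  have he3 : ∏ m ∈ (Finset.Icc 1 (2*M)).filter (fun m => 2 ∣ m), (1 - (X : PowerSeries ℤ)^(2*m))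
      = pp ℤ 4 M := by
    rw [prod_filter_even M (fun m => (1 - (X : PowerSeries ℤ)^(2*m)))]
    refine Finset.prod_congr rfl fun j _ => ?_
    rw [show 2*(2*j) = 4*j by ring]
  rw [he1, he2, he3]
  ring

end OC

namespace OC
variable {R S : Type*} [CommRing R] [CommRing S]

theorem gauss2 : fk 1 * rescale (-1 : ℤ) (fk 1) * fk 4 = (fk 2)^3 := by
  ext n
  have t1 : truncEq n (fk 1) (pp ℤ 1 (2*(n+1))) := truncEq_fk 1 le_rfl (by omega)
  have tE : truncEq n (rescale (-1 : ℤ) (fk 1)) (rescale (-1 : ℤ) (pp ℤ 1 (2*(n+1)))) := by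
    intro j hj
    rw [coeff_rescale, coeff_rescale, t1 j hj]
  have t4 : truncEq n (fk 4) (pp ℤ 4 (n+1)) := truncEq_fk 4 (by omega) (by omega)
  have t2 : truncEq n (fk 2) (pp ℤ 2 (2*(n+1))) := truncEq_fk 2 (by omega) (by omega)
  have t2' : truncEq n (fk 2) (pp ℤ 2 (n+1)) := truncEq_fk 2 (by omega) (by omega)
  rw [((t1.mul tE).mul t4) n le_rfl, fin_identity (n+1),
    show (fk 2)^3 = fk 2 * (fk 2)^2 by ring]
  exact ((t2.mul (t2'.pow 2)) n le_rfl).symm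

theorem fk_pow_four (k : ℕ) (hk : 1 ≤ k) :
    (PowerSeries.map (Int.castRingHom (ZMod 4)) (fk k))^4
      = (PowerSeries.map (Int.castRingHom (ZMod 4)) (fk (2*k)))^2 := by
  ext n
  have t1 : truncEq n (PowerSeries.map (Int.castRingHom (ZMod 4)) (fk k))
      (pp (ZMod 4) k (n+1)) := truncEq_map_fk _ k hk (by omega)
  have t2 : truncEq n (PowerSeries.map (Int.castRingHom (ZMod 4)) (fk (2*k)))
      (pp (ZMod 4) (2*k) (n+1)) := truncEq_map_fk _ (2*k) (by omega) (by omega)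
  rw [(t1.pow 4) n le_rfl, (t2.pow 2) n le_rfl]
  have key : (pp (ZMod 4) k (n+1))^4 = (pp (ZMod 4) (2*k) (n+1))^2 := by
    unfold pp
    rw [← Finset.prod_pow, ← Finset.prod_pow]
    refine Finset.prod_congr rfl fun m _ => ?_
    have h4 : (4 : PowerSeries (ZMod 4)) = 0 := by
      rw [show (4 : PowerSeries (ZMod 4)) = C 4 from (map_ofNat (C (R := (ZMod 4))) 4).symm,
        show (4 : ZMod 4) = 0 from rfl, map_zero]
    rw [show 2*k*m = 2*(k*m) by ring, pow_mul]
    set u := (X : PowerSeries (ZMod 4))^(k*m)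
    linear_combination (2*u^2 - u^3 - u) * h4
  rw [key]

end OC

namespace OC
variable {R S : Type*} [CommRing R] [CommRing S]

theorem coeff_two_mul (n : ℕ) (F : PowerSeries R) :
    coeff n (2 * F) = 2 * coeff n F := by
  rw [two_mul, map_add, two_mul]

/-- even part -/
def evenPart (F : PowerSeries R) : PowerSeries R := PowerSeries.mk fun n => coeff (2*n) F

theorem even_decomp (F : PowerSeries R) :
    F + rescale (-1 : R) F = 2 * ex2 (evenPart F) := by
  ext n
  rw [map_add, coeff_rescale, coeff_two_mul]
  rcases Nat.even_or_odd n with ⟨m, hm⟩ | ⟨c, hc⟩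
  · rw [show n = 2 * m by omega, coeff_ex2_even, evenPart, coeff_mk,
      show ((-1 : R))^(2*m) = 1 by rw [pow_mul]; norm_num]
    ring
  · rw [coeff_ex2_odd _ _ (by omega), show ((-1 : R))^n = -1 by
      rw [hc]; rw [pow_add, pow_mul]; norm_num]
    ring

theorem zmod4_two_mul (x y : ZMod 4)
    (h : ZMod.castHom (by norm_num : (2:ℕ) ∣ 4) (ZMod 2) x
       = ZMod.castHom (by norm_num : (2:ℕ) ∣ 4) (ZMod 2) y) : 2 * x = 2 * y := by
  revert h; revert x y; decide

theorem two_mul_congr (F G : PowerSeries (ZMod 4))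
    (h : PowerSeries.map (ZMod.castHom (by norm_num : (2:ℕ) ∣ 4) (ZMod 2)) F
       = PowerSeries.map (ZMod.castHom (by norm_num : (2:ℕ) ∣ 4) (ZMod 2)) G) :
    2 * F = 2 * G := by
  ext n
  rw [coeff_two_mul, coeff_two_mul]
  have := congrArg (coeff n) h
  rw [coeff_map, coeff_map] at this
  exact zmod4_two_mul _ _ this

theorem two_ne_zero_Z : (2 : PowerSeries ℤ) ≠ 0 := by
  intro h
  have h2 : ((2 : PowerSeries ℤ)) = C 2 := (map_ofNat (C (R := ℤ)) 2).symm
  rw [h2] at h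
  have := congrArg (coeff 0) h
  rw [coeff_zero_eq_constantCoeff, constantCoeff_C, map_zero] at this
  norm_num at this

theorem fk2_eq : fk 2 = ex2 (fk 1) := by
  have := fk_two_mul 1 le_rfl
  norm_num at this
  exact this

theorem fk4_eq : fk 4 = ex2 (fk 2) := by
  have := fk_two_mul 2 (by norm_num)
  norm_num at this
  exact this

theorem fk8_eq : fk 8 = ex2 (fk 4) := by
  have := fk_two_mul 4 (by norm_num)
  norm_num at this
  exact this

theorem rescale_fk2 : rescale (-1 : ℤ) (fk 2) = fk 2 := by
  rw [fk2_eq, rescale_neg_one_ex2]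

theorem rescale_fk4 : rescale (-1 : ℤ) (fk 4) = fk 4 := by
  rw [fk4_eq, rescale_neg_one_ex2]

theorem isUnit_map_E (f : ℤ →+* R) :
    IsUnit (PowerSeries.map f (rescale (-1 : ℤ) (fk 1))) := by
  rw [PowerSeries.isUnit_iff_constantCoeff]
  have h0 : coeff 0 (rescale (-1 : ℤ) (fk 1)) = 1 := by
    rw [coeff_rescale, pow_zero, one_mul, constantCoeff_fk 1 le_rfl]
  have : constantCoeff (PowerSeries.map f (rescale (-1 : ℤ) (fk 1))) = 1 := by
    rw [← coeff_zero_eq_constantCoeff, coeff_map, h0, map_one]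
  rw [this]; exact isUnit_one

end OC

theorem stmt_19 (i : ℕ) (hi : 1 ≤ i) (ab : ℕ → ℕ) (hab : IsGenOvercubic (2 * i) ab)
    (n : ℕ) :
    ab (2 * n) ≡ ab n [MOD 4] := by
  obtain ⟨j, rfl⟩ : ∃ j, i = j + 1 := ⟨i - 1, by omega⟩
  classical
  set A : PowerSeries ℤ := PowerSeries.mk fun m => (ab m : ℤ) with hAdef
  set E : PowerSeries ℤ := rescale (-1 : ℤ) (fk 1) with hEdef
  set Fe : PowerSeries ℤ := OC.evenPart (fk 1) with hFedef
  set B : PowerSeries ℤ := OC.evenPart A with hBdef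
  have h1 : A * (fk 1)^2 * (fk 2)^(4*j+4) = (fk 2)^3 * (fk 4)^(2*j+1) := by
    have h := hab
    unfold IsGenOvercubic at h
    rw [show 2*(2*(j+1)) = 4*j+4 by ring, show 2*(j+1)-1 = 2*j+1 by omega] at h
    exact h
  have h1' : (rescale (-1:ℤ) A) * E^2 * (fk 2)^(4*j+4) = (fk 2)^3 * (fk 4)^(2*j+1) := by
    have h := congrArg (rescale (-1:ℤ)) h1
    simpa only [map_mul, map_pow, OC.rescale_fk2, OC.rescale_fk4, ← hEdef] using h
  have gauss2' : fk 1 * E * fk 4 = (fk 2)^3 := by rw [hEdef]; exact OC.gauss2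
  have hFe : fk 1 + E = 2 * OC.ex2 Fe := OC.even_decomp (fk 1)
  have hB : A + rescale (-1:ℤ) A = 2 * OC.ex2 B := OC.even_decomp A
  have hx : OC.ex2 (Fe^2) = (OC.ex2 Fe)^2 := map_pow _ _ _
  have hsq : (fk 1)^2 + E^2 = 2*(2*OC.ex2 (Fe^2)) - 2*(fk 1 * E) := by
    linear_combination (fk 1 + E + 2*OC.ex2 Fe) * hFe - 4 * hx
  have hadd : (2 * OC.ex2 B) * ((fk 1)^2 * E^2 * (fk 2)^(4*j+4))
      = (fk 2)^3 * (fk 4)^(2*j+1) * ((fk 1)^2 + E^2) := by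
    linear_combination (-((fk 1)^2 * E^2 * (fk 2)^(4*j+4))) * hB + E^2 * h1 + (fk 1)^2 * h1'
  have hM2 : 2 * (OC.ex2 B * ((fk 1)^2 * E^2 * (fk 2)^(4*j+4)))
      = 2 * ((fk 2)^3 * (fk 4)^(2*j+1) * (2*OC.ex2 (Fe^2) - fk 1 * E)) := by
    linear_combination hadd + ((fk 2)^3 * (fk 4)^(2*j+1)) * hsq
  have hM : OC.ex2 B * ((fk 1)^2 * E^2 * (fk 2)^(4*j+4))
      = (fk 2)^3 * (fk 4)^(2*j+1) * (2*OC.ex2 (Fe^2) - fk 1 * E) :=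
    mul_left_cancel₀ OC.two_ne_zero_Z hM2
  have hI : (fk 1)^2 * fk 4 + (fk 2)^3 = 2 * (fk 1 * fk 4 * OC.ex2 Fe) := by
    linear_combination (fk 1 * fk 4) * hFe - gauss2'
  have hII : (fk 2)^2 * fk 8 + (fk 4)^3 = 2*(fk 2 * fk 8 * OC.ex2 (OC.ex2 Fe)) := by
    have h := congrArg (OC.ex2 (R := ℤ)) hI
    simp only [map_add, map_mul, map_pow, map_ofNat] at h
    rw [← OC.fk2_eq, ← OC.fk4_eq, ← OC.fk8_eq] at h
    exact h
  -- pass to `ZMod 4`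
  set φ : ℤ →+* ZMod 4 := Int.castRingHom (ZMod 4) with hφdef
  set g1 := PowerSeries.map φ (fk 1) with hg1def
  set g2 := PowerSeries.map φ (fk 2) with hg2def
  set g4 := PowerSeries.map φ (fk 4) with hg4def
  set g8 := PowerSeries.map φ (fk 8) with hg8def
  set gE := PowerSeries.map φ E with hgEdef
  set gA := PowerSeries.map φ A with hgAdef
  set gB := PowerSeries.map φ B with hgBdef
  set gFe := PowerSeries.map φ Fe with hgFedef
  have h1_4 : gA * g1^2 * g2^(4*j+4) = g2^3 * g4^(2*j+1) := by
    have h := congrArg (PowerSeries.map φ) h1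
    simpa only [map_mul, map_pow] using h
  have hx1 : OC.ex2 g1 = g2 := by
    rw [hg1def, OC.ex2_map, ← OC.fk2_eq, hg2def]
  have hx2 : OC.ex2 g2 = g4 := by
    rw [hg2def, OC.ex2_map, ← OC.fk4_eq, hg4def]
  have hx4 : OC.ex2 g4 = g8 := by
    rw [hg4def, OC.ex2_map, ← OC.fk8_eq, hg8def]
  have oneex : OC.ex2 gA * g2^2 * g4^(4*j+4) = g4^3 * g8^(2*j+1) := by
    have h := congrArg (OC.ex2 (R := ZMod 4)) h1_4
    simp only [map_mul, map_pow] at h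
    rwa [hx1, hx2, hx4] at h
  have gauss4 : g1 * gE * g4 = g2^3 := by
    have h := congrArg (PowerSeries.map φ) gauss2'
    simpa only [map_mul, map_pow] using h
  have hM4 : OC.ex2 gB * (g1^2 * gE^2 * g2^(4*j+4))
      = g2^3 * g4^(2*j+1) * (2*(OC.ex2 gFe)^2 - g1*gE) := by
    have h := congrArg (PowerSeries.map φ) hM
    simp only [map_mul, map_pow, map_sub, map_add, map_ofNat, ← OC.ex2_map] at h
    exact h
  have hII4 : g2^2*g8 + g4^3 = 2*(g2*g8*OC.ex2 (OC.ex2 gFe)) := by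
    have h := congrArg (PowerSeries.map φ) hII
    simp only [map_mul, map_pow, map_add, map_ofNat, ← OC.ex2_map] at h
    exact h
  have rel1 : g2^4 = g4^2 := by
    have h := OC.fk_pow_four 2 (by norm_num)
    rw [show (2*2 : ℕ) = 4 from rfl] at h
    exact h
  have rel2 : g4^4 = g8^2 := by
    have h := OC.fk_pow_four 4 (by norm_num)
    rw [show (2*4 : ℕ) = 8 from rfl] at h
    exact h
  -- mod 2 bridge
  set ψ : ZMod 4 →+* ZMod 2 := ZMod.castHom (by norm_num : (2:ℕ) ∣ 4) (ZMod 2) with hψdef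
  have bridge : 2 * (g2*g4*g8*OC.ex2 (OC.ex2 gFe)) = 2 * (g2^5*g4*(OC.ex2 gFe)^2) := by
    apply OC.two_mul_congr
    simp only [map_mul, map_pow, ← OC.ex2_map]
    have s2 : (PowerSeries.map ψ g2)^2 = PowerSeries.map ψ g4 := by
      rw [OC.frob, OC.ex2_map, hx2]
    have s4 : (PowerSeries.map ψ g4)^2 = PowerSeries.map ψ g8 := by
      rw [OC.frob, OC.ex2_map, hx4]
    rw [show (PowerSeries.map ψ g2)^5
        = PowerSeries.map ψ g2 * ((PowerSeries.map ψ g2)^2)^2 by ring, s2, s4,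
      OC.frob (OC.ex2 (PowerSeries.map ψ gFe))]
    ring
  have hu2 : IsUnit g2 := OC.isUnit_map_fk φ 2 (by norm_num)
  have hu4 : IsUnit g4 := OC.isUnit_map_fk φ 4 (by norm_num)
  have hu1 : IsUnit g1 := OC.isUnit_map_fk φ 1 (by norm_num)
  have huE : IsUnit gE := by rw [hgEdef, hEdef]; exact OC.isUnit_map_E φ
  have key' : g4*g8 + g2^6 = 2*(g2^3*g4*(OC.ex2 gFe)^2) := by
    refine (hu2.pow 2).mul_left_cancel ?_
    linear_combination g4 * hII4 + bridge + (g2^4+g4^2) * rel1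
  have e1 : g2^(4*j+8) = g4^(2*j+4) := by
    rw [show 4*j+8 = 4*(j+2) by ring, show 2*j+4 = 2*(j+2) by ring, pow_mul, pow_mul, rel1]
  have e2 : g8^(2*j) = g4^(4*j) := by
    rw [show 2*j = 2*j from rfl, pow_mul, show 4*j = 4*j from rfl, pow_mul, rel2]
  have key1 : g2^(4*j+10) * g4^3 * g8^(2*j+1) + g2^8 * g4^(6*j+6)
      = 2 * (g2^5 * g4^(6*j+7) * (OC.ex2 gFe)^2) := by
    linear_combination (g2^2*g4^(6*j+6)) * key' + (g2^2*g4^3*g8*g8^(2*j)) * e1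
      + (g2^2*g4^3*g8*g4^(2*j+4)) * e2
  have hUW : IsUnit (g2^2*g4^(4*j+6)) := (hu2.pow 2).mul (hu4.pow _)
  have hW : (OC.ex2 gA * (g1^2 * gE^2 * g2^(4*j+4))) * (g2^2*g4^(4*j+6))
      = (g2^3 * g4^(2*j+1) * (2*(OC.ex2 gFe)^2 - g1*gE)) * (g2^2*g4^(4*j+6)) := by
    linear_combination (g1^2*gE^2*g2^(4*j+4)*g4^2) * oneex
      + (g2^(4*j+4)*g4^3*g8^(2*j+1)*(g1*gE*g4 + g2^3)) * gauss4
      + (g2^5*g4^(6*j+6)) * gauss4 + key1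
  have KEY0 : OC.ex2 gA * (g1^2 * gE^2 * g2^(4*j+4))
      = g2^3 * g4^(2*j+1) * (2*(OC.ex2 gFe)^2 - g1*gE) :=
    hUW.mul_right_cancel hW
  have hU : IsUnit (g1^2 * gE^2 * g2^(4*j+4)) := ((hu1.pow 2).mul (huE.pow 2)).mul (hu2.pow _)
  have hBA : OC.ex2 gB = OC.ex2 gA := hU.mul_right_cancel (hM4.trans KEY0.symm)
  have hfin : gB = gA := OC.ex2_injective hBA
  have hc := congrArg (coeff n) hfin
  rw [hgBdef, hgAdef, coeff_map, coeff_map, hBdef, hAdef] at hc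
  simp only [OC.evenPart, coeff_mk] at hc
  have hcast : ((ab (2*n) : ℤ) : ZMod 4) = ((ab n : ℤ) : ZMod 4) := hc
  have hnat : ((ab (2*n) : ℕ) : ZMod 4) = ((ab n : ℕ) : ZMod 4) := by
    push_cast at hcast ⊢
    exact hcast
  exact (ZMod.natCast_eq_natCast_iff _ _ _).mp hnat
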